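/- Let F : X → Fsetcat be a normal oplax functor such that X and each Fx are categories enriched in collectable filtered sets. Then the Grothendieck-type category E(F) — with objects pairs (x,a), a ∈ Fx, morphisms (f,ξ) : (x,a) → (x',b) where f : x → x' in X and ξ : (Ff)a → b in Fx', and deg(f,ξ) = deg f + deg ξ — is again enriched in collectable filtered sets, i.e., each hom filtered set E(F)((x,a),(x',b)) has finite filtration levels. -/
import Mathlib


noncomputable section
open Classical

/-- A function `f : ℝ → ℚ` is left finite. -/
def LeftFinite (f : ℝ → ℚ) : Prop := ∀ L : ℝ, {x : ℝ | x ≤ L ∧ f x ≠ 0}.Finite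

/-- Membership of the Novikov series ring `A = ℚ[[q^ℝ]]`. -/
def IsNov (f : ℝ → ℚ) : Prop := LeftFinite f ∧ ∀ x < (0 : ℝ), f x = 0

/-- Convolution product in `A`. -/
def conv (f g : ℝ → ℚ) : ℝ → ℚ := fun ℓ => ∑ᶠ x : ℝ, f x * g (ℓ - x)

/-- The unit `1 = q^0` of `A`. -/
def delta : ℝ → ℚ := fun x => if x = 0 then 1 else 0

/-- A category enriched in (`ℝ≥0`-)filtered sets: hom sets carry degrees, identities have
degree `0`, and composition does not increase total degree. -/
structure FCat (C : Type) where
  Hom : C → C → Type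
  deg : ∀ {a b : C}, Hom a b → ℝ
  id : ∀ a : C, Hom a a
  comp : ∀ {a b c : C}, Hom a b → Hom b c → Hom a c
  id_comp : ∀ {a b : C} (f : Hom a b), comp (id a) f = f
  comp_id : ∀ {a b : C} (f : Hom a b), comp f (id b) = f
  assoc : ∀ {a b c d : C} (f : Hom a b) (g : Hom b c) (h : Hom c d),
    comp (comp f g) h = comp f (comp g h)
  deg_nonneg : ∀ {a b : C} (f : Hom a b), 0 ≤ deg f
  deg_id : ∀ a : C, deg (id a) = 0
  deg_comp : ∀ {a b c : C} (f : Hom a b) (g : Hom b c), deg (comp f g) ≤ deg f + deg g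

variable {C : Type}

/-- `f` is an identity morphism. -/
def FCat.IsIdHom (X : FCat C) {a b : C} (f : X.Hom a b) : Prop :=
  a = b ∧ HEq f (X.id a)

/-- The enrichment is in collectable filtered sets: each filtration level of each hom
filtered set is finite. -/
def FCat.Collectable (X : FCat C) : Prop :=
  ∀ (a b : C) (ℓ : ℝ), {f : X.Hom a b | X.deg f ≤ ℓ}.Finite

/-- `X` is of finite type: for every object `a` and level `ℓ` there are only finitely many
morphisms of degree `≤ ℓ` with source `a`, or with target `a`. -/
def FCat.FiniteType (X : FCat C) : Prop :=
  ∀ (a : C) (ℓ : ℝ),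
    {p : Σ b : C, X.Hom a b | X.deg p.2 ≤ ℓ}.Finite ∧
    {p : Σ b : C, X.Hom b a | X.deg p.2 ≤ ℓ}.Finite

/-- The zeta function `ζ_X(a,b) = #X(a,b) = ∑_{f ∈ X(a,b)} q^{deg f}`. -/
def zeta (X : FCat C) (a b : C) : ℝ → ℚ :=
  fun x => (Nat.card {f : X.Hom a b // X.deg f = x} : ℚ)

/-- A non-degenerate path in `X` from `a` to `b`: a composable sequence of `n ≥ 1`
non-identity morphisms. -/
structure NDPath (X : FCat C) (a b : C) where
  n : ℕ
  npos : 0 < n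
  obj : Fin (n + 1) → C
  hom : ∀ i : Fin n, X.Hom (obj i.castSucc) (obj i.succ)
  src : obj 0 = a
  tgt : obj (Fin.last n) = b
  nonid : ∀ i : Fin n, ¬ X.IsIdHom (hom i)

/-- The length of a non-degenerate path. -/
def NDPath.length {X : FCat C} {a b : C} (p : NDPath X a b) : ℝ :=
  ∑ i : Fin p.n, X.deg (p.hom i)

/-- `X` is quasi-tame: of finite type, and there are finitely many non-degenerate paths
from `a` to `b` of length `≤ ℓ`, for all `a`, `b`, `ℓ`. -/
def QuasiTame (X : FCat C) : Prop :=
  X.FiniteType ∧ ∀ (a b : C) (ℓ : ℝ), {p : NDPath X a b | p.length ≤ ℓ}.Finite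

/-- `X` is tame: of finite type, and for every `ℓ` there is `N_ℓ > 0` such that every
non-degenerate `N_ℓ`-path has length `> ℓ`. -/
def Tame (X : FCat C) : Prop :=
  X.FiniteType ∧ ∀ ℓ : ℝ, ∃ N : ℕ, 0 < N ∧
    ∀ (a b : C) (p : NDPath X a b), p.n = N → ℓ < p.length

/-- Membership of `M_C(A)`. -/
def MSmat (C : Type) (f : C → C → ℝ → ℚ) : Prop :=
  ∀ (ℓ : ℝ) (s : C),
    {t : C | ∃ x : ℝ, x < ℓ ∧ f s t x ≠ 0}.Finite ∧
    {t : C | ∃ x : ℝ, x < ℓ ∧ f t s x ≠ 0}.Finite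

/-- Matrix convolution product. -/
def matConv (C : Type) (f g : C → C → ℝ → ℚ) : C → C → ℝ → ℚ :=
  fun s t x => ∑ᶠ u : C, conv (f s u) (g u t) x

/-- The identity matrix. -/
def matId (C : Type) : C → C → ℝ → ℚ := fun s t x => if s = t ∧ x = 0 then 1 else 0

/-- Powers of a matrix. -/
def matPow (C : Type) (f : C → C → ℝ → ℚ) : ℕ → (C → C → ℝ → ℚ)
  | 0 => matId C
  | n + 1 => matConv C f (matPow C f n)

/-- A normal oplax functor `F : X → Fsetcat`: filtered-set enriched categories as fibers,
degree-non-increasing filtered functors for morphisms, strict preservation of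
identities, and comparison transformations `τ_{f,g} : F(g∘f) ⇒ Fg ∘ Ff` whose components
have degree `≤ deg f + deg g − deg(g∘f)`. -/
structure NOF (B : Type) (X : FCat B) where
  Ob : B → Type
  Fib : ∀ b : B, FCat (Ob b)
  map : ∀ {b b' : B}, X.Hom b b' → Ob b → Ob b'
  mapHom : ∀ {b b' : B} (f : X.Hom b b') {a a' : Ob b},
    (Fib b).Hom a a' → (Fib b').Hom (map f a) (map f a')
  mapHom_deg : ∀ {b b' : B} (f : X.Hom b b') {a a' : Ob b} (ξ : (Fib b).Hom a a'),
    (Fib b').deg (mapHom f ξ) ≤ (Fib b).deg ξ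
  mapHom_id : ∀ {b b' : B} (f : X.Hom b b') (a : Ob b),
    mapHom f ((Fib b).id a) = (Fib b').id (map f a)
  mapHom_comp : ∀ {b b' : B} (f : X.Hom b b') {a₁ a₂ a₃ : Ob b}
    (ξ : (Fib b).Hom a₁ a₂) (θ : (Fib b).Hom a₂ a₃),
    mapHom f ((Fib b).comp ξ θ) = (Fib b').comp (mapHom f ξ) (mapHom f θ)
  map_id : ∀ (b : B) (a : Ob b), map (X.id b) a = a
  mapHom_id' : ∀ (b : B) {a a' : Ob b} (ξ : (Fib b).Hom a a'),
    HEq (mapHom (X.id b) ξ) ξ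
  τ : ∀ {b b' b'' : B} (f : X.Hom b b') (g : X.Hom b' b'') (a : Ob b),
    (Fib b'').Hom (map (X.comp f g) a) (map g (map f a))
  τ_deg : ∀ {b b' b'' : B} (f : X.Hom b b') (g : X.Hom b' b'') (a : Ob b),
    (Fib b'').deg (τ f g a) ≤ X.deg f + X.deg g - X.deg (X.comp f g)
  τ_natural : ∀ {b b' b'' : B} (f : X.Hom b b') (g : X.Hom b' b'')
    {a a' : Ob b} (ξ : (Fib b).Hom a a'),
    (Fib b'').comp (mapHom (X.comp f g) ξ) (τ f g a') =
      (Fib b'').comp (τ f g a) (mapHom g (mapHom f ξ))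

/-- Let `F : X → Fsetcat` be a normal oplax functor such that `X` and each fiber `Fx`
are enriched in collectable filtered sets.  Then the Grothendieck-type category `E(F)` —
whose hom filtered set from `(b,a)` to `(b',a')` is `⋃_{f : b → b'} {f} × Fb'(Ff a, a')`,
with `deg (f,ξ) = deg f + deg ξ` — is again enriched in collectable filtered sets. -/
theorem stmt18 (B : Type) (X : FCat B) (F : NOF B X)
    (hX : X.Collectable)
    (hF : ∀ b : B, (F.Fib b).Collectable) :
    ∀ (b b' : B) (a : F.Ob b) (a' : F.Ob b') (ℓ : ℝ),
      {p : Σ f : X.Hom b b', (F.Fib b').Hom (F.map f a) a' |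
        X.deg p.1 + (F.Fib b').deg p.2 ≤ ℓ}.Finite := by
  intro b b' a a' ℓ
  have hS : {f : X.Hom b b' | X.deg f ≤ ℓ}.Finite := hX b b' ℓ
  have key : {p : Σ f : X.Hom b b', (F.Fib b').Hom (F.map f a) a' |
      X.deg p.1 + (F.Fib b').deg p.2 ≤ ℓ} ⊆
      ⋃ f ∈ {f : X.Hom b b' | X.deg f ≤ ℓ},
        (fun ξ => (⟨f, ξ⟩ : Σ f : X.Hom b b', (F.Fib b').Hom (F.map f a) a')) ''
          {ξ | (F.Fib b').deg ξ ≤ ℓ} := by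
    rintro ⟨f, ξ⟩ hp
    have h1 : 0 ≤ X.deg f := X.deg_nonneg f
    have h2 : 0 ≤ (F.Fib b').deg ξ := (F.Fib b').deg_nonneg ξ
    simp only [Set.mem_setOf_eq] at hp
    refine Set.mem_biUnion (show f ∈ {f | X.deg f ≤ ℓ} by simp; linarith) ?_
    exact ⟨ξ, by simp; linarith, rfl⟩
  exact Set.Finite.subset
    (Set.Finite.biUnion hS (fun f _ => ((hF b' (F.map f a) a' ℓ)).image _)) key
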